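/- For integers 0 ≤ i, i' ≤ q − 1 and 1 ≤ j, j' ≤ q − 1 with (i, j) ≠ (i', j'), the sets S_{i,j} and S_{i',j'} are disjoint. -/
import Mathlib


/-- The set `S_{i,j}`. -/
def gkSij (q i j : ℤ) : Set ℤ :=
  {x : ℤ | ∃ k₁ k₂ : ℤ, 0 ≤ k₁ ∧ k₁ ≤ q - 1 ∧ 0 ≤ k₂ ∧ k₂ ≤ q ^ 3 - q - j * q ^ 2 + i ∧
    x = (i * q - j * q ^ 2 + k₁) * (q ^ 3 - q + 1) + (j * q ^ 2 - i + k₂) * (q ^ 3 + 1)}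

/-- If `u, u'` lie in a window of length `< q^3 + 1` and `u A + v B = u' A + v' B`
with `A = q^3 - q + 1`, `B = q^3 + 1` coprime, then `u = u'`. -/
lemma gk_aux (q u u' v v' : ℤ) (hq2 : 2 ≤ q)
    (hub : u ≤ -1) (hlb : q ^ 2 - q ^ 3 ≤ u)
    (hub' : u' ≤ -1) (hlb' : q ^ 2 - q ^ 3 ≤ u')
    (heq : u * (q ^ 3 - q + 1) + v * (q ^ 3 + 1)
         = u' * (q ^ 3 - q + 1) + v' * (q ^ 3 + 1)) : u = u' := by
  have key : (u - u') * (q ^ 3 - q + 1) = (v' - v) * (q ^ 3 + 1) := by linear_combination heq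
  have hcop : IsCoprime ((q:ℤ) ^ 3 + 1) (q ^ 3 - q + 1) := ⟨-(q ^ 2 - 1), q ^ 2, by ring⟩
  have hdvd : (q ^ 3 + 1) ∣ (u - u') :=
    hcop.dvd_of_dvd_mul_right ⟨v' - v, by rw [key]; ring⟩
  obtain ⟨t, ht⟩ := hdvd
  have hq3 : (0:ℤ) < q ^ 3 + 1 := by positivity
  have ht0 : t = 0 := by
    rcases lt_trichotomy t 0 with h | h | h
    · exfalso
      nlinarith [mul_le_mul_of_nonneg_left (show t ≤ -1 by linarith) hq3.le, sq_nonneg q]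
    · exact h
    · exfalso
      nlinarith [mul_le_mul_of_nonneg_left (show 1 ≤ t by linarith) hq3.le, sq_nonneg q]
  rw [ht0, mul_zero] at ht
  linarith

/-- If `|c| < q` and `c = q * d` then `d = 0`. -/
lemma gk_aux2 (q c d : ℤ) (hq2 : 2 ≤ q) (hc : -(q - 1) ≤ c) (hc' : c ≤ q - 1)
    (h : c = q * d) : d = 0 := by
  rcases lt_trichotomy d 0 with hd | hd | hd
  · exfalso
    nlinarith [mul_le_mul_of_nonneg_left (show d ≤ -1 by linarith) (show (0:ℤ) ≤ q by linarith)]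
  · exact hd
  · exfalso
    nlinarith [mul_le_mul_of_nonneg_left (show 1 ≤ d by linarith) (show (0:ℤ) ≤ q by linarith)]

/-- For `(i, j) ≠ (i', j')` in the given ranges, `S_{i,j}` and `S_{i',j'}` are disjoint. -/
theorem gk_Sij_disjoint (q : ℤ) (hq : IsPrimePow q) (i j i' j' : ℤ)
    (hi0 : 0 ≤ i) (hi1 : i ≤ q - 1) (hj0 : 1 ≤ j) (hj1 : j ≤ q - 1)
    (hi'0 : 0 ≤ i') (hi'1 : i' ≤ q - 1) (hj'0 : 1 ≤ j') (hj'1 : j' ≤ q - 1)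
    (hne : (i, j) ≠ (i', j')) :
    gkSij q i j ∩ gkSij q i' j' = ∅ := by
  rw [Set.eq_empty_iff_forall_notMem]
  rintro x ⟨⟨k₁, k₂, hk10, hk11, hk20, hk21, hx⟩, ⟨k₁', k₂', hk10', hk11', hk20', hk21', hx'⟩⟩
  have hq2 : (2:ℤ) ≤ q := by linarith
  have hq0 : (0:ℤ) < q := by linarith
  have huu : i * q - j * q ^ 2 + k₁ = i' * q - j' * q ^ 2 + k₁' := by
    apply gk_aux q _ _ (j * q ^ 2 - i + k₂) (j' * q ^ 2 - i' + k₂') hq2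
    · nlinarith [mul_nonneg (by linarith : (0:ℤ) ≤ q - 1 - i) hq0.le,
        mul_nonneg (by linarith : (0:ℤ) ≤ j - 1) (sq_nonneg q)]
    · nlinarith [mul_nonneg hi0 hq0.le,
        mul_nonneg (by linarith : (0:ℤ) ≤ q - 1 - j) (sq_nonneg q)]
    · nlinarith [mul_nonneg (by linarith : (0:ℤ) ≤ q - 1 - i') hq0.le,
        mul_nonneg (by linarith : (0:ℤ) ≤ j' - 1) (sq_nonneg q)]
    · nlinarith [mul_nonneg hi'0 hq0.le,
        mul_nonneg (by linarith : (0:ℤ) ≤ q - 1 - j') (sq_nonneg q)]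
    · linarith [hx, hx']
  -- u determines k₁, i, j
  have hd : k₁ - k₁' = q * (i' - i + (j - j') * q) := by linear_combination huu
  have hd0 : i' - i + (j - j') * q = 0 :=
    gk_aux2 q _ _ hq2 (by linarith) (by linarith) hd
  have hd1 : i' - i = q * (j' - j) := by linear_combination hd0
  have hjj : j' - j = 0 := gk_aux2 q _ _ hq2 (by linarith) (by linarith) hd1
  have hii : i = i' := by rw [hjj, mul_zero] at hd1; linarith
  exact hne (by rw [hii, show j = j' by linarith])
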